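/- Let σ be an n×n real orthogonal matrix of finite order acting ℂ-linearly on ℂⁿ, and let U_σ = {x ∈ ℂⁿ : x̄ = σx}. Then U_σ is a real-linear subspace whose real dimension equals the complex dimension of the fixed subspace {x ∈ ℂⁿ : σ²x = x}. In particular, if σ² ≠ id then the n-dimensional Hausdorff measure of U_σ is zero. -/

import Mathlib

set_option maxHeartbeats 1000000


open MeasureTheory Matrix
open scoped ENNReal

noncomputable instance (n : ℕ) : MeasurableSpace (EuclideanSpace ℂ (Fin n)) := borel _
instance (n : ℕ) : BorelSpace (EuclideanSpace ℂ (Fin n)) := ⟨rfl⟩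

/-- The ℂ-linear action of a real `n × n` matrix on `ℂⁿ` (with its Euclidean metric). -/
noncomputable def mact {n : ℕ} (σ : Matrix (Fin n) (Fin n) ℝ) (x : EuclideanSpace ℂ (Fin n)) :
    EuclideanSpace ℂ (Fin n) :=
  WithLp.toLp 2 (fun i => ∑ j, (σ i j : ℂ) * x j)

/-- Entrywise complex conjugation on `ℂⁿ`. -/
noncomputable def cconj {n : ℕ} (x : EuclideanSpace ℂ (Fin n)) : EuclideanSpace ℂ (Fin n) :=
  WithLp.toLp 2 (fun i => (starRingEnd ℂ) (x i))

section aux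

variable {n : ℕ}

local notation "E" => EuclideanSpace ℂ (Fin n)

lemma mact_add (σ : Matrix (Fin n) (Fin n) ℝ) (x y : E) :
    mact σ (x + y) = mact σ x + mact σ y := by
  ext i
  simp [mact, mul_add, Finset.sum_add_distrib]

lemma mact_smul (σ : Matrix (Fin n) (Fin n) ℝ) (c : ℂ) (x : E) :
    mact σ (c • x) = c • mact σ x := by
  ext i
  simp only [mact, PiLp.toLp_apply, PiLp.smul_apply, smul_eq_mul, Finset.mul_sum]
  exact Finset.sum_congr rfl fun j _ => by ring

lemma mact_sub (σ : Matrix (Fin n) (Fin n) ℝ) (x y : E) :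
    mact σ (x - y) = mact σ x - mact σ y := by
  have h := mact_add σ (x - y) y
  rw [sub_add_cancel] at h
  rw [h]; abel

lemma mact_one (x : E) : mact (1 : Matrix (Fin n) (Fin n) ℝ) x = x := by
  ext i
  simp [mact, Matrix.one_apply, apply_ite]

lemma mact_mul (σ τ : Matrix (Fin n) (Fin n) ℝ) (x : E) :
    mact (σ * τ) x = mact σ (mact τ x) := by
  ext i
  simp only [mact, PiLp.toLp_apply, Matrix.mul_apply]
  push_cast
  simp only [Finset.sum_mul, Finset.mul_sum]
  rw [Finset.sum_comm]
  exact Finset.sum_congr rfl fun l _ => Finset.sum_congr rfl fun j _ => by ring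

lemma cconj_add (x y : E) : cconj (x + y) = cconj x + cconj y := by
  ext i; simp [cconj]

lemma cconj_smul (c : ℂ) (x : E) : cconj (c • x) = (starRingEnd ℂ c) • cconj x := by
  ext i; simp [cconj]

lemma cconj_sub (x y : E) : cconj (x - y) = cconj x - cconj y := by
  have h := cconj_add (x - y) y
  rw [sub_add_cancel] at h
  rw [h]; abel

lemma cconj_cconj (x : E) : cconj (cconj x) = x := by
  ext i; simp [cconj]

lemma cconj_mact (σ : Matrix (Fin n) (Fin n) ℝ) (x : E) :
    cconj (mact σ x) = mact σ (cconj x) := by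
  ext i
  simp [cconj, mact, map_sum, Complex.conj_ofReal]

/-- `mact σ` as a ℂ-linear map. -/
noncomputable def mactL (σ : Matrix (Fin n) (Fin n) ℝ) : E →ₗ[ℂ] E :=
  { toFun := mact σ
    map_add' := mact_add σ
    map_smul' := mact_smul σ }

/-- `cconj` as an ℝ-linear map. -/
noncomputable def conjL : E →ₗ[ℝ] E :=
  { toFun := cconj
    map_add' := cconj_add
    map_smul' := by
      intro c x
      have := cconj_smul (c : ℂ) x
      simpa [Complex.conj_ofReal, Complex.coe_smul] using this }

end aux

/-- For a real orthogonal matrix `σ` of finite order acting ℂ-linearly on `ℂⁿ`,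
the twisted real subspace `U_σ = {x : x̄ = σx}` is a real-linear subspace whose real dimension
equals the complex dimension of the fixed space `{x : σ²x = x}`; in particular, if `σ² ≠ 1`
then `𝓗ⁿ(U_σ) = 0`. -/
theorem stmt2 (n : ℕ) (σ : Matrix (Fin n) (Fin n) ℝ)
    (horth : σᵀ * σ = 1) (k : ℕ) (hk : 0 < k) (hord : σ ^ k = 1) :
    (∃ (S : Submodule ℝ (EuclideanSpace ℂ (Fin n)))
        (T : Submodule ℂ (EuclideanSpace ℂ (Fin n))),
        (S : Set (EuclideanSpace ℂ (Fin n))) = {x | cconj x = mact σ x} ∧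
        (T : Set (EuclideanSpace ℂ (Fin n))) = {x | mact (σ * σ) x = x} ∧
        Module.finrank ℝ S = Module.finrank ℂ T) ∧
    (σ * σ ≠ 1 →
      μH[(n : ℝ)] {x : EuclideanSpace ℂ (Fin n) | cconj x = mact σ x} = 0) := by
  classical
  set E := EuclideanSpace ℂ (Fin n) with hEdef
  haveI : FiniteDimensional ℝ E := Module.Finite.trans ℂ E
  -- injectivity of `mact σ`
  have hinj : Function.Injective (mact σ) := by
    intro x y h
    have h2 := congrArg (mact σᵀ) h
    rwa [← mact_mul, ← mact_mul, horth, mact_one, mact_one] at h2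
  -- the submodules
  set S : Submodule ℝ E := LinearMap.ker (conjL - (mactL σ).restrictScalars ℝ) with hSdef
  set T : Submodule ℂ E := LinearMap.ker (mactL (σ * σ) - LinearMap.id) with hTdef
  have hSmem : ∀ x : E, x ∈ S ↔ cconj x = mact σ x := by
    intro x
    simp [hSdef, LinearMap.mem_ker, sub_eq_zero, conjL, mactL]
  have hTmem : ∀ x : E, x ∈ T ↔ mact (σ * σ) x = x := by
    intro x
    simp [hTdef, LinearMap.mem_ker, sub_eq_zero, mactL]
  have hScoe : (S : Set E) = {x : E | cconj x = mact σ x} := by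
    ext x; exact hSmem x
  have hTcoe : (T : Set E) = {x : E | mact (σ * σ) x = x} := by
    ext x; exact hTmem x
  -- the ℝ-linear map (a, b) ↦ a + I • b from S × S onto T
  let g : E →ₗ[ℝ] E :=
    { toFun := fun x : E => Complex.I • x
      map_add' := fun a b => smul_add _ a b
      map_smul' := fun c x => (smul_comm c Complex.I x).symm }
  let f : (S × S) →ₗ[ℝ] E :=
    S.subtype.comp (LinearMap.fst ℝ S S) +
      g.comp (S.subtype.comp (LinearMap.snd ℝ S S))
  have hf_apply : ∀ p : S × S, f p = (p.1 : E) + Complex.I • (p.2 : E) := fun p => rfl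
  -- injectivity of f
  have hfinj : Function.Injective f := by
    rw [← LinearMap.ker_eq_bot, LinearMap.ker_eq_bot']
    intro p hp
    rw [hf_apply] at hp
    obtain ⟨a, b⟩ := p
    simp only at hp
    have ha : cconj (a : E) = mact σ a := (hSmem a).1 a.2
    have hb : cconj (b : E) = mact σ b := (hSmem b).1 b.2
    have hc : cconj ((a : E) + Complex.I • (b : E)) = 0 := by
      rw [hp]; exact map_zero conjL
    rw [cconj_add, cconj_smul, ha, hb] at hc
    have hc' : mact σ ((a : E) - Complex.I • (b : E)) = 0 := by
      rw [mact_sub, mact_smul, sub_eq_add_neg, ← neg_smul, ← Complex.conj_I]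
      exact hc
    have h0 : mact σ (0 : E) = 0 := by
      have := mact_smul σ 0 (0 : E); simpa using this
    have hsub : (a : E) - Complex.I • (b : E) = 0 := hinj (by rw [hc', h0])
    have hA : (a : E) = 0 := by
      have h2 : (2 : ℂ) • (a : E) = 0 := by
        have hadd := congrArg₂ (· + ·) hp hsub
        simp only [add_zero] at hadd
        rw [← hadd, two_smul]; abel
      have := congrArg (fun y : E => (2 : ℂ)⁻¹ • y) h2
      simpa [smul_smul] using this
    have hB : (b : E) = 0 := by
      have hIb : Complex.I • (b : E) = 0 := by
        rw [hA, zero_add] at hp; exact hp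
      have := congrArg (fun y : E => (-Complex.I) • y) hIb
      simpa [smul_smul, Complex.I_mul_I] using this
    exact Prod.ext (Subtype.ext hA) (Subtype.ext hB)
  -- range of f is T (as ℝ-submodule)
  have hrange : LinearMap.range f = T.restrictScalars ℝ := by
    apply le_antisymm
    · rintro _ ⟨⟨a, b⟩, rfl⟩
      rw [hf_apply]
      have ha : cconj (a : E) = mact σ a := (hSmem a).1 a.2
      have hb : cconj (b : E) = mact σ b := (hSmem b).1 b.2
      have hmem : ∀ c : E, cconj c = mact σ c → c ∈ T := by
        intro c hc
        rw [hTmem, mact_mul, ← hc, ← cconj_mact, ← hc, cconj_cconj]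
      exact T.add_mem (hmem a ha) (T.smul_mem _ (hmem b hb))
    · intro x hx
      rw [Submodule.restrictScalars_mem, hTmem] at hx
      set y : E := mact σ (cconj x) with hy
      have hxconjT : mact (σ * σ) (cconj x) = cconj x := by
        have := congrArg cconj hx
        rwa [cconj_mact, mact_mul, ← mact_mul] at this
      have hcy : cconj y = mact σ x := by
        rw [hy, cconj_mact, cconj_cconj]
      have haS : (x + y) ∈ S := by
        rw [hSmem, cconj_add, hcy, mact_add, hy, ← mact_mul, hxconjT, add_comm]
      have hbS : ((-Complex.I) • (x - y)) ∈ S := by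
        rw [hSmem, cconj_smul, mact_smul, cconj_sub, hcy, mact_sub, hy, ← mact_mul,
          hxconjT]
        rw [show (starRingEnd ℂ) (-Complex.I) = Complex.I by simp]
        rw [show Complex.I • (cconj x - mact σ x) = (-Complex.I) • (mact σ x - cconj x) by
          rw [neg_smul, ← smul_neg, neg_sub]]
      have hfab : f (⟨x + y, haS⟩, ⟨(-Complex.I) • (x - y), hbS⟩) = (2 : ℝ) • x := by
        rw [hf_apply]
        simp only
        rw [smul_smul, mul_neg, Complex.I_mul_I, neg_neg, one_smul]
        have : (x + y) + (x - y) = (2 : ℝ) • x := by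
          rw [two_smul]; abel
        exact this
      have h2x : (2 : ℝ) • x ∈ LinearMap.range f := ⟨_, hfab⟩
      have : x = (2 : ℝ)⁻¹ • ((2 : ℝ) • x) := by
        rw [smul_smul]; norm_num
      rw [this]
      exact Submodule.smul_mem _ _ h2x
  -- dimension count
  haveI : FiniteDimensional ℝ S := inferInstance
  have hdim : Module.finrank ℝ S = Module.finrank ℂ T := by
    have h1 : Module.finrank ℝ (S × S) = Module.finrank ℝ (LinearMap.range f) :=
      (LinearMap.finrank_range_of_inj hfinj).symm
    have h2 : Module.finrank ℝ (LinearMap.range f)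
        = Module.finrank ℝ (T.restrictScalars ℝ) := by rw [hrange]
    have h3 : Module.finrank ℝ (T.restrictScalars ℝ) = Module.finrank ℝ T :=
      ((Submodule.restrictScalarsEquiv (S := ℝ) (R := ℂ) (M := EuclideanSpace ℂ (Fin n)) T).restrictScalars ℝ).finrank_eq
    have h4 : Module.finrank ℝ T = 2 * Module.finrank ℂ T :=
      finrank_real_of_complex T
    have h5 : Module.finrank ℝ (S × S)
        = Module.finrank ℝ S + Module.finrank ℝ S := Module.finrank_prod
    omega
  refine ⟨⟨S, T, hScoe, hTcoe, hdim⟩, ?_⟩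
  -- measure zero part
  intro hss
  have hTne : T ≠ ⊤ := by
    intro hT
    apply hss
    ext i j
    have hmem : mact (σ * σ) (EuclideanSpace.single j (1 : ℂ))
        = EuclideanSpace.single j (1 : ℂ) := by
      rw [← hTmem]
      rw [hT]; trivial
    have h := congrFun (congrArg WithLp.ofLp hmem) i
    simp only [mact, PiLp.toLp_apply, EuclideanSpace.single_apply, mul_ite, mul_one, mul_zero,
      Finset.sum_ite_eq, Finset.sum_ite_eq', Finset.mem_univ, if_true] at h
    rw [Matrix.one_apply]
    by_cases hij : i = j
    · subst hij
      simp only [if_pos rfl] at h ⊢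
      exact_mod_cast h
    · simp only [if_neg hij] at h ⊢
      exact_mod_cast h
  have hlt : Module.finrank ℂ T < n := by
    have := Submodule.finrank_lt (K := ℂ) (V := E) hTne
    rwa [finrank_euclideanSpace_fin] at this
  have hSlt : Module.finrank ℝ S < n := by rw [hdim]; exact hlt
  -- the set is the range of the isometric inclusion of S
  have hsetr : {x : E | cconj x = mact σ x} = Set.range ((↑) : S → E) := by
    rw [← hScoe, Subtype.range_coe]
  have hdimH : dimH {x : E | cconj x = mact σ x} < (n : NNReal) := by
    rw [hsetr]
    calc dimH (Set.range ((↑) : S → E))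
        ≤ dimH (Set.univ : Set ↥S) :=
          (isometry_subtype_coe.lipschitz).dimH_range_le
      _ = Module.finrank ℝ S := Real.dimH_univ_eq_finrank ↥S
      _ < (n : NNReal) := by
          rw [show ((n : NNReal) : ℝ≥0∞) = (n : ℝ≥0∞) by simp]
          exact_mod_cast hSlt
  have h0 := hausdorffMeasure_of_dimH_lt hdimH
  rwa [show ((n : NNReal) : ℝ) = (n : ℝ) by simp] at h0
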